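/- Let B be a bumpless pipe dream of size n that is not reduced. Then the permutation w_B contains the pattern 1243 or the pattern 2143. -/

import Mathlib

/-!
Formalization of bumpless pipe dreams (BPDs).

A bumpless pipe dream of size `n` assigns one of six tiles (blank, horizontal,
vertical, crossing, r-elbow, j-elbow) to each cell of the `n × n` grid, subject
to matching and boundary conditions.  We additionally include a `bump` tile
(an r-elbow together with a j-elbow in one cell), which is used only in
K-theoretic resolutions of BPDs.
-/

/-- The tile types: the six BPD tiles together with the bump tile used in
K-theoretic resolutions. -/
inductive Tile : Type
  | blank | horiz | vert | cross | bump | relbow | jelbow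
  deriving DecidableEq

namespace Tile

/-- Does a pipe segment meet the south edge of the tile? -/
def south : Tile → Bool
  | vert => true | cross => true | bump => true | relbow => true
  | _ => false

/-- Does a pipe segment meet the north edge of the tile? -/
def north : Tile → Bool
  | vert => true | cross => true | bump => true | jelbow => true
  | _ => false

/-- Does a pipe segment meet the west edge of the tile? -/
def west : Tile → Bool
  | horiz => true | cross => true | bump => true | jelbow => true
  | _ => false

/-- Does a pipe segment meet the east edge of the tile? -/
def east : Tile → Bool
  | horiz => true | cross => true | bump => true | relbow => true
  | _ => false

/-- A pipe entering the tile `t` (from the south if `d = true`, from the west if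
`d = false`) exits through the east edge; otherwise it exits through the north
edge. -/
def exitEast (t : Tile) (d : Bool) : Bool :=
  if d then (t == relbow || t == bump) else !(t == jelbow || t == bump)

end Tile

/-- A tile diagram of size `n`: an assignment of a tile to each cell `(i, j)`
(row `i` from the top, column `j` from the left, `0`-indexed) of the `n × n`
grid, such that adjacent tiles match along shared edges, a segment meets the
south boundary edge of every column and the east boundary edge of every row,
and no segment meets the north or west boundary of the grid.  (Cells outside
the grid are blank, as a normalization.)  A diagram may use the `bump` tile;
honest bumpless pipe dreams (`BPD`) do not. -/
structure Diagram (n : ℕ) : Type where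
  tile : ℕ → ℕ → Tile
  vmatch : ∀ i j, i + 1 < n → j < n → (tile i j).south = (tile (i + 1) j).north
  hmatch : ∀ i j, i < n → j + 1 < n → (tile i j).east = (tile i (j + 1)).west
  bottom : ∀ j, j < n → (tile (n - 1) j).south = true
  right : ∀ i, i < n → (tile i (n - 1)).east = true
  top : ∀ j, j < n → (tile 0 j).north = false
  left : ∀ i, i < n → (tile i 0).west = false
  outside : ∀ i j, ¬(i < n ∧ j < n) → tile i j = Tile.blank

/-- A bumpless pipe dream of size `n`: a diagram using only the six BPD tiles
(no bump tiles). -/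
structure BPD (n : ℕ) extends Diagram n where
  nobump : ∀ i j, tile i j ≠ Tile.bump

namespace Diagram

variable {n : ℕ}

/-- One step of a pipe: a pipe currently in cell `(σ.1, σ.2.1)`, having entered
from the south if `σ.2.2 = true` (from the west otherwise), moves to the next
cell (east, entering from the west; or north, entering from the south). -/
def Step (D : Diagram n) (σ σ' : ℕ × ℕ × Bool) : Prop :=
  σ.1 < n ∧ σ.2.1 < n ∧
    (if (D.tile σ.1 σ.2.1).exitEast σ.2.2 then
        σ.2.1 + 1 < n ∧ σ' = (σ.1, σ.2.1 + 1, false)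
      else
        0 < σ.1 ∧ σ' = (σ.1 - 1, σ.2.1, true))

/-- The pipe entering at the bottom of column `y` passes through the cell `c`. -/
def Passes (D : Diagram n) (y : ℕ) (c : ℕ × ℕ) : Prop :=
  ∃ d : Bool, Relation.ReflTransGen D.Step (n - 1, y, true) (c.1, c.2, d)

/-- The pipe entering at the bottom of column `y` exits at the right of row `x`;
that is, `y → x` is a pipe of the diagram. -/
def ExitsAt (D : Diagram n) (y x : ℕ) : Prop :=
  ∃ d : Bool, Relation.ReflTransGen D.Step (n - 1, y, true) (x, n - 1, d) ∧
    (D.tile x (n - 1)).exitEast d = true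

/-- The permutation of the diagram is `w`: for every row `x`, `w x → x` is a
pipe of the diagram. -/
def HasPerm (D : Diagram n) (w : Equiv.Perm (Fin n)) : Prop :=
  ∀ x : Fin n, D.ExitsAt (w x) x

/-- The set of crossing tiles shared by the pipes entering at the bottoms of
columns `y₁` and `y₂`. -/
def SharedCrossings (D : Diagram n) (y₁ y₂ : ℕ) : Set (ℕ × ℕ) :=
  {c | D.tile c.1 c.2 = Tile.cross ∧ D.Passes y₁ c ∧ D.Passes y₂ c}

/-- The diagram is reduced: any two distinct pipes pass through at most one
common crossing tile. -/
def Reduced (D : Diagram n) : Prop :=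
  ∀ y₁ y₂, y₁ < n → y₂ < n → y₁ ≠ y₂ → (D.SharedCrossings y₁ y₂).Subsingleton

/-- `y → x` is a removable pipe of the diagram: it is a pipe, the tile at
`(x, y)` is an r-elbow, and it is the only r-elbow tile in row `x` and also the
only r-elbow tile in column `y`. -/
def RemovablePipe (D : Diagram n) (y x : ℕ) : Prop :=
  D.ExitsAt y x ∧ D.tile x y = Tile.relbow ∧
    (∀ j, j ≠ y → D.tile x j ≠ Tile.relbow) ∧
    (∀ i, i ≠ x → D.tile i y ≠ Tile.relbow)

/-- The diagram is minimal: it has no removable pipe. -/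
def Minimal (D : Diagram n) : Prop := ∀ y x, ¬ D.RemovablePipe y x

/-- The number of j-elbow tiles of the diagram. -/
def jcount (D : Diagram n) : ℕ :=
  ((Finset.range n ×ˢ Finset.range n).filter
    (fun c => D.tile c.1 c.2 = Tile.jelbow)).card

end Diagram

namespace BPD

variable {n m : ℕ}

/-- `B ∈ BPD(w; v)` for the subword `v` of `w` with (strictly increasing) index
sequence `s : Fin m ↪o Fin n`: the permutation of `B` is `w` and the removable
pipes of `B` are precisely the pipes `w k → k` for the indices `k` of `w` not
used by the subword. -/
def InBPDv (B : BPD n) (w : Equiv.Perm (Fin n)) (s : Fin m ↪o Fin n) : Prop :=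
  B.toDiagram.HasPerm w ∧
    ∀ y x : ℕ, B.toDiagram.RemovablePipe y x ↔
      ∃ k : Fin n, k ∉ Set.range s ∧ x = (k : ℕ) ∧ y = (w k : ℕ)

end BPD

/-- `c` comes strictly before `c'` in the (weakly north-east) traversal order of
a pipe: `c` is weakly south-west of `c'` and is a different cell. -/
def Before (c c' : ℕ × ℕ) : Prop := c'.1 ≤ c.1 ∧ c.2 ≤ c'.2 ∧ c ≠ c'

namespace Diagram

/-- The pipes entering in columns `y₁` and `y₂` pass through a common crossing
tile strictly before the cell `c`. -/
def CrossedBefore {n : ℕ} (D : Diagram n) (y₁ y₂ : ℕ) (c : ℕ × ℕ) : Prop :=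
  ∃ c' ∈ D.SharedCrossings y₁ y₂, Before c' c

end Diagram

/-- `D` is the K-theoretic resolution `B_K` of the bumpless pipe dream `B`:
each crossing tile of `B` either remains a crossing or becomes a bump in `D`
(all other tiles are unchanged), any two pipes of `D` cross at most once, and at
a former crossing tile the two pipes of `D` passing through it bounce (bump)
there exactly when they have already crossed before reaching it. -/
structure IsKRes {n : ℕ} (B : BPD n) (D : Diagram n) : Prop where
  agree : ∀ i j, B.tile i j ≠ Tile.cross → D.tile i j = B.tile i j
  res : ∀ i j, B.tile i j = Tile.cross →
    D.tile i j = Tile.cross ∨ D.tile i j = Tile.bump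
  once : D.Reduced
  bump_iff : ∀ i j y₁ y₂, y₁ < n → y₂ < n → y₁ ≠ y₂ →
    D.Passes y₁ (i, j) → D.Passes y₂ (i, j) → B.tile i j = Tile.cross →
    (D.tile i j = Tile.bump ↔ D.CrossedBefore y₁ y₂ (i, j))

/-- The permutation `w` contains the pattern `p`. -/
def PermContains {n k : ℕ} (w : Equiv.Perm (Fin n)) (p : Equiv.Perm (Fin k)) : Prop :=
  ∃ f : Fin k ↪o Fin n, ∀ a b : Fin k, p a < p b ↔ w (f a) < w (f b)

/-- The pattern `1243` (as a permutation of `Fin 4`, `0`-indexed). -/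
def p1243 : Equiv.Perm (Fin 4) := Equiv.swap 2 3

/-- The pattern `2143` (as a permutation of `Fin 4`, `0`-indexed). -/
def p2143 : Equiv.Perm (Fin 4) := Equiv.swap 0 1 * Equiv.swap 2 3

namespace BPDProof

open Relation

variable {n : ℕ} (B : BPD n)

/-- Well-formed pipe state. -/
def Ok (σ : ℕ × ℕ × Bool) : Prop :=
  σ.1 < n ∧ σ.2.1 < n ∧
    cond σ.2.2 (B.tile σ.1 σ.2.1).south (B.tile σ.1 σ.2.1).west = true

lemma step_det {σ τ τ' : ℕ × ℕ × Bool} (h : B.toDiagram.Step σ τ)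
    (h' : B.toDiagram.Step σ τ') : τ = τ' := by
  obtain ⟨-, -, h⟩ := h
  obtain ⟨-, -, h'⟩ := h'
  by_cases hc : ((B.toDiagram.tile σ.1 σ.2.1).exitEast σ.2.2 : Bool)
  · rw [if_pos hc] at h h'; rw [h.2, h'.2]
  · rw [if_neg hc] at h h'; rw [h.2, h'.2]

lemma step_mono {σ τ : ℕ × ℕ × Bool} (h : B.toDiagram.Step σ τ) :
    τ.1 ≤ σ.1 ∧ σ.2.1 ≤ τ.2.1 := by
  obtain ⟨-, -, h⟩ := h
  split at h
  · obtain ⟨-, rfl⟩ := h; exact ⟨le_rfl, Nat.le_succ _⟩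
  · obtain ⟨-, rfl⟩ := h; exact ⟨Nat.sub_le _ _, le_rfl⟩

lemma rtg_mono {σ τ : ℕ × ℕ × Bool} (h : ReflTransGen B.toDiagram.Step σ τ) :
    τ.1 ≤ σ.1 ∧ σ.2.1 ≤ τ.2.1 := by
  induction h with
  | refl => exact ⟨le_rfl, le_rfl⟩
  | tail _ hstep ih =>
      exact ⟨(step_mono B hstep).1.trans ih.1, ih.2.trans (step_mono B hstep).2⟩

lemma step_ok {σ τ : ℕ × ℕ × Bool} (hok : Ok B σ) (h : B.toDiagram.Step σ τ) :
    Ok B τ := by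
  obtain ⟨r, c, d⟩ := σ
  obtain ⟨hr, hc, hd⟩ := hok
  obtain ⟨-, -, h⟩ := h
  by_cases he : ((B.toDiagram.tile r c).exitEast d : Bool)
  · rw [if_pos he] at h
    obtain ⟨hc1, rfl⟩ := h
    refine ⟨hr, hc1, ?_⟩
    have heast : (B.tile r c).east = true := by
      have hnb := B.nobump r c
      cases d <;> cases htile : B.tile r c <;>
        simp_all [Tile.exitEast, Tile.west, Tile.east, Tile.south]
    have hm := B.hmatch r c hr hc1
    simpa using (by rw [← hm, heast] : (B.tile r (c + 1)).west = true)
  · rw [if_neg he] at h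
    obtain ⟨h0, rfl⟩ := h
    have hnorth : (B.tile r c).north = true := by
      have hnb := B.nobump r c
      cases d <;> cases htile : B.tile r c <;>
        simp_all [Tile.exitEast, Tile.west, Tile.north, Tile.south]
    refine ⟨lt_of_le_of_lt (Nat.sub_le _ _) hr, hc, ?_⟩
    have hm := B.vmatch (r - 1) c (by omega) hc
    rw [Nat.sub_add_cancel h0] at hm
    simpa using (by rw [hm, hnorth] : (B.tile (r-1) c).south = true)

lemma rtg_ok {σ τ : ℕ × ℕ × Bool} (hok : Ok B σ)
    (h : ReflTransGen B.toDiagram.Step σ τ) : Ok B τ := by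
  induction h with
  | refl => exact hok
  | tail _ hstep ih => exact step_ok B ih hstep

lemma start_ok {y : ℕ} (hy : y < n) : Ok B (n - 1, y, true) := by
  refine ⟨by omega, hy, ?_⟩
  simpa using B.bottom y hy

/-- Reachability of a state by the pipe entering at the bottom of column `y`. -/
def Reach (y : ℕ) (σ : ℕ × ℕ × Bool) : Prop :=
  ReflTransGen B.toDiagram.Step (n - 1, y, true) σ

lemma reach_ok {y : ℕ} (hy : y < n) {σ : ℕ × ℕ × Bool} (h : Reach B y σ) :
    Ok B σ := rtg_ok B (start_ok B hy) h

lemma confluence {σ τ τ' : ℕ × ℕ × Bool} (h : ReflTransGen B.toDiagram.Step σ τ)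
    (h' : ReflTransGen B.toDiagram.Step σ τ') :
    ReflTransGen B.toDiagram.Step τ τ' ∨ ReflTransGen B.toDiagram.Step τ' τ := by
  induction h with
  | refl => exact Or.inl h'
  | tail hab hstep ih =>
      rcases ih with hb | hb
      · rcases hb.cases_head with rfl | ⟨m, hm, hmτ'⟩
        · exact Or.inr (ReflTransGen.single hstep)
        · rw [step_det B hm hstep] at hmτ'
          exact Or.inl hmτ'
      · exact Or.inr (hb.tail hstep)

/-- A state from which no step is possible. -/
def Terminal (σ : ℕ × ℕ × Bool) : Prop := ∀ τ, ¬ B.toDiagram.Step σ τ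

lemma exit_terminal {x : ℕ} {d : Bool}
    (he : (B.tile x (n - 1)).exitEast d = true) : Terminal B (x, n - 1, d) := by
  rintro τ ⟨-, -, h⟩
  rw [if_pos he] at h
  dsimp only at h
  omega

lemma rtg_to_terminal {σ τ : ℕ × ℕ × Bool}
    (h : ReflTransGen B.toDiagram.Step σ τ ∨ ReflTransGen B.toDiagram.Step τ σ)
    (ht : Terminal B τ) : ReflTransGen B.toDiagram.Step σ τ := by
  rcases h with h | h
  · exact h
  · rcases h.cases_head with rfl | ⟨m, hm, -⟩
    · exact ReflTransGen.refl
    · exact absurd hm (ht _)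

lemma rtg_terminal_eq {σ τ τ' : ℕ × ℕ × Bool}
    (h : ReflTransGen B.toDiagram.Step σ τ) (h' : ReflTransGen B.toDiagram.Step σ τ')
    (ht : Terminal B τ) (ht' : Terminal B τ') : τ = τ' := by
  have h2 := rtg_to_terminal B (confluence B h h') ht'
  rcases h2.cases_head with rfl | ⟨m, hm, -⟩
  · rfl
  · exact absurd hm (ht _)

lemma tile_lt {t j : ℕ} (h : B.tile t j = Tile.jelbow) : t < n ∧ j < n := by
  by_contra hc
  rw [B.outside t j (by tauto)] at h
  exact Tile.noConfusion h

lemma jelbow_not_bottom {t j : ℕ} (h : B.tile t j = Tile.jelbow) : t < n - 1 := by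
  obtain ⟨ht, hj⟩ := tile_lt B h
  rcases Nat.lt_or_ge t (n - 1) with h' | h'
  · exact h'
  · exfalso
    have : t = n - 1 := by omega
    subst this
    have hb := B.bottom j hj
    rw [h] at hb
    exact absurd hb (by simp [Tile.south])

lemma jelbow_not_right {t j : ℕ} (h : B.tile t j = Tile.jelbow) : j < n - 1 := by
  obtain ⟨ht, hj⟩ := tile_lt B h
  rcases Nat.lt_or_ge j (n - 1) with h' | h'
  · exact h'
  · exfalso
    have : j = n - 1 := by omega
    subst this
    have hb := B.right t ht
    rw [h] at hb
    exact absurd hb (by simp [Tile.east])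

lemma eE_false_of_false {r c : ℕ} (h : (B.tile r c).exitEast false = false) :
    B.tile r c = Tile.jelbow := by
  have hb := B.nobump r c
  cases ht : B.tile r c <;> simp_all [Tile.exitEast]

lemma eE_true_of_true {r c : ℕ} (h : (B.tile r c).exitEast true = true) :
    B.tile r c = Tile.relbow := by
  have hb := B.nobump r c
  cases ht : B.tile r c <;> simp_all [Tile.exitEast]

lemma eE_false_of_jelbow {r c : ℕ} (h : B.tile r c = Tile.jelbow) :
    (B.tile r c).exitEast false = false := by rw [h]; rfl

lemma eE_true_of_not_jelbow {r c : ℕ} (h : B.tile r c ≠ Tile.jelbow) :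
    (B.tile r c).exitEast false = true := by
  have hb := B.nobump r c
  cases ht : B.tile r c <;> simp_all [Tile.exitEast]

lemma step_east {r c : ℕ} {d : Bool} (hr : r < n) (hc1 : c + 1 < n)
    (he : (B.tile r c).exitEast d = true) :
    B.toDiagram.Step (r, c, d) (r, c + 1, false) :=
  ⟨hr, (show c < n by omega), by rw [if_pos he]; exact ⟨hc1, rfl⟩⟩

lemma step_north {r c : ℕ} {d : Bool} (hr : r < n) (hc : c < n) (h0 : 0 < r)
    (he : (B.tile r c).exitEast d = false) :
    B.toDiagram.Step (r, c, d) (r - 1, c, true) :=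
  ⟨hr, hc, by rw [if_neg (by simp [he])]; exact ⟨h0, rfl⟩⟩

lemma step_cases {σ τ : ℕ × ℕ × Bool} (h : B.toDiagram.Step σ τ) :
    (σ.2.1 + 1 < n ∧ (B.tile σ.1 σ.2.1).exitEast σ.2.2 = true ∧
      τ = (σ.1, σ.2.1 + 1, false)) ∨
    (σ.1 < n ∧ 0 < σ.1 ∧ (B.tile σ.1 σ.2.1).exitEast σ.2.2 = false ∧
      τ = (σ.1 - 1, σ.2.1, true)) := by
  obtain ⟨h1, h2, hs⟩ := h
  by_cases he : ((B.toDiagram.tile σ.1 σ.2.1).exitEast σ.2.2 = true)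
  · rw [if_pos he] at hs; exact Or.inl ⟨hs.1, he, hs.2⟩
  · rw [if_neg he] at hs; exact Or.inr ⟨h1, hs.1, by simpa using he, hs.2⟩

lemma col_run {y : ℕ} {σ : ℕ × ℕ × Bool} (hσ : Reach B y σ) :
    ∀ r c : ℕ, σ = (r, c, true) →
      y = c ∨ ∃ ρ, r < ρ ∧ ρ < n ∧ B.tile ρ c = Tile.jelbow := by
  induction hσ with
  | refl =>
      intro r c h
      injection h with h1 h2
      injection h2 with h2 h3
      exact Or.inl h2
  | @tail b σ' hab hstep ih =>
      rintro r c rfl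
      obtain ⟨b1, b2, db⟩ := b
      rcases step_cases B hstep with ⟨-, -, heq⟩ | ⟨hb1, h0, he, heq⟩
      · exfalso
        injection heq with h1 h2
        injection h2 with h2 h3
        exact Bool.noConfusion h3
      · dsimp only at he heq
        injection heq with h1 h2
        injection h2 with h2 h3
        subst h1; subst h2
        cases db with
        | false =>
            have hj := eE_false_of_false B he
            exact Or.inr ⟨b1, by omega, hb1, hj⟩
        | true =>
            rcases ih b1 c rfl with h | ⟨ρ, hρ1, hρ2, hρ3⟩
            · exact Or.inl h
            · exact Or.inr ⟨ρ, by omega, hρ2, hρ3⟩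

end BPDProof

namespace BPDProof

open Relation

variable {n : ℕ} (B : BPD n)

lemma ok_fst {r c : ℕ} {d : Bool} (h : Ok B (r, c, d)) : r < n := h.1
lemma ok_snd {r c : ℕ} {d : Bool} (h : Ok B (r, c, d)) : c < n := h.2.1
lemma ok_south {r c : ℕ} (h : Ok B (r, c, true)) : (B.tile r c).south = true := h.2.2
lemma ok_west {r c : ℕ} (h : Ok B (r, c, false)) : (B.tile r c).west = true := h.2.2

lemma not_reach_jelbow_south {t j : ℕ} (hj : B.tile t j = Tile.jelbow) {y : ℕ}
    (hy : y < n) (h : Reach B y (t, j, true)) : False := by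
  have := ok_south B (reach_ok B hy h)
  rw [hj] at this
  exact absurd this (by simp [Tile.south])

/-- Climbing up column `j` below a jelbow at `(t, j)`: the pipe entering at the
bottom of column `j` turns east at some row strictly below `t`. -/
lemma climb_col {t j : ℕ} (hj : B.tile t j = Tile.jelbow) :
    ∃ s, t < s ∧ s < n ∧ Reach B j (s, j, true) ∧
      (B.tile s j).exitEast true = true := by
  have htn := jelbow_not_bottom B hj
  have hjn := (tile_lt B hj).2
  suffices H : ∀ k r, r - t ≤ k → t < r → r < n → Reach B j (r, j, true) →
      ∃ s, t < s ∧ s < n ∧ Reach B j (s, j, true) ∧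
        (B.tile s j).exitEast true = true by
    exact H n (n - 1) (by omega) (by omega) (by omega) ReflTransGen.refl
  intro k
  induction k with
  | zero => intro r h1 h2 _ _; omega
  | succ k ih =>
      intro r h1 h2 h3 hre
      by_cases he : (B.tile r j).exitEast true = true
      · exact ⟨r, h2, h3, hre, he⟩
      · have he' : (B.tile r j).exitEast true = false := by simpa using he
        have hstep := step_north B h3 hjn (by omega) he'
        have hre' : Reach B j (r - 1, j, true) := hre.tail hstep
        have hne : r - 1 ≠ t := by
          intro hEq
          rw [hEq] at hre'
          exact not_reach_jelbow_south B hj hjn hre'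
        exact ih (r - 1) (by omega) (by omega) (by omega) hre'

/-- Travelling east along a row: the pipe either exits at the right edge of
this row, or turns north at a jelbow in this row. -/
lemma run_east {y : ℕ} (hy : y < n) :
    ∀ k r c, n - c ≤ k → Reach B y (r, c, false) →
      B.toDiagram.ExitsAt y r ∨ ∃ γ, c ≤ γ ∧ γ < n ∧ B.tile r γ = Tile.jelbow := by
  intro k
  induction k with
  | zero =>
      intro r c h1 hre
      have := ok_snd B (reach_ok B hy hre)
      omega
  | succ k ih =>
      intro r c h1 hre
      have hok := reach_ok B hy hre
      by_cases hj : B.tile r c = Tile.jelbow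
      · exact Or.inr ⟨c, le_rfl, ok_snd B hok, hj⟩
      · have he := eE_true_of_not_jelbow B hj
        rcases Nat.lt_or_ge (c + 1) n with hc1 | hc1
        · have hstep := step_east B (ok_fst B hok) hc1 he
          rcases ih r (c + 1) (by omega) (hre.tail hstep) with h | ⟨γ, hγ1, hγ2, hγ3⟩
          · exact Or.inl h
          · exact Or.inr ⟨γ, by omega, hγ2, hγ3⟩
        · have hceq : c = n - 1 := by
            have := ok_snd B hok
            omega
          subst hceq
          exact Or.inl ⟨false, hre, he⟩

section Perm

variable {w : Equiv.Perm (Fin n)} (hw : B.toDiagram.HasPerm w)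
include hw

lemma exitsAt_exists {y : ℕ} (hy : y < n) :
    B.toDiagram.ExitsAt y ((w.symm ⟨y, hy⟩ : Fin n) : ℕ) := by
  have := hw (w.symm ⟨y, hy⟩)
  rwa [Equiv.apply_symm_apply] at this

lemma exit_state_of_reach {y : ℕ} (hy : y < n) {σ : ℕ × ℕ × Bool}
    (hσ : Reach B y σ) :
    ∃ d : Bool, ReflTransGen B.toDiagram.Step σ
      (((w.symm ⟨y, hy⟩ : Fin n) : ℕ), n - 1, d) ∧
      (B.tile ((w.symm ⟨y, hy⟩ : Fin n) : ℕ) (n - 1)).exitEast d = true := by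
  obtain ⟨d, hr, he⟩ := exitsAt_exists B hw hy
  exact ⟨d, rtg_to_terminal B (confluence B hσ hr) (exit_terminal B he), he⟩

lemma shared_state {y₁ y₂ : ℕ} (h1 : y₁ < n) (h2 : y₂ < n) {σ : ℕ × ℕ × Bool}
    (r1 : Reach B y₁ σ) (r2 : Reach B y₂ σ) : y₁ = y₂ := by
  obtain ⟨d₁, hr₁, he₁⟩ := exit_state_of_reach B hw h1 r1
  obtain ⟨d₂, hr₂, he₂⟩ := exit_state_of_reach B hw h2 r2
  have heq := rtg_terminal_eq B hr₁ hr₂ (exit_terminal B he₁) (exit_terminal B he₂)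
  have hx : ((w.symm ⟨y₁, h1⟩ : Fin n) : ℕ) = ((w.symm ⟨y₂, h2⟩ : Fin n) : ℕ) := by
    injection heq
  have h' : w.symm ⟨y₁, h1⟩ = w.symm ⟨y₂, h2⟩ := Fin.ext hx
  simpa [Fin.ext_iff] using w.symm.injective h'

/-- The exit row of pipe `y` is `w.symm y`. -/
lemma exitsAt_w {y x : ℕ} (hy : y < n) (h : B.toDiagram.ExitsAt y x) :
    x = ((w.symm ⟨y, hy⟩ : Fin n) : ℕ) := by
  obtain ⟨d, hr, he⟩ := h
  obtain ⟨d', hr', he'⟩ := exitsAt_exists B hw hy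
  have heq := rtg_terminal_eq B hr hr' (exit_terminal B he) (exit_terminal B he')
  injection heq

/-- The exit row of a reachable state bounds it from below. -/
lemma exit_row_le {y : ℕ} (hy : y < n) {σ : ℕ × ℕ × Bool} (hσ : Reach B y σ) :
    ((w.symm ⟨y, hy⟩ : Fin n) : ℕ) ≤ σ.1 := by
  obtain ⟨d, hr, -⟩ := exit_state_of_reach B hw hy hσ
  exact (rtg_mono B hr).1

lemma entry_col_le {y : ℕ} {σ : ℕ × ℕ × Bool} (hσ : Reach B y σ) : y ≤ σ.2.1 :=
  (rtg_mono B hσ).2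

end Perm

end BPDProof

namespace BPDProof

open Relation

variable {n : ℕ} (B : BPD n)

/-- Auxiliary path induction: a pipe that is in row `t` strictly to the right of
a jelbow `(t, j)` either entered at the bottom of a column `> j`, or climbed
into row `t` coming from a jelbow strictly south-east of `(t, j)`. -/
lemma row_exit_aux {t j : ℕ} (hj : B.tile t j = Tile.jelbow) (htn : t < n - 1)
    {GOAL : Prop}
    (hIH : ∀ t' j' : ℕ, t < t' → j < j' → B.tile t' j' = Tile.jelbow → GOAL)
    {yX : ℕ} (hyXn : yX < n) :
    ∀ σ : ℕ × ℕ × Bool, Reach B yX σ → σ.1 = t → j < σ.2.1 → GOAL ∨ j < yX := by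
  intro σ hσ
  induction hσ with
  | refl =>
      intro h1 h2
      exfalso
      dsimp only at h1
      omega
  | @tail b σ' hab hstep ihM =>
      intro h1 h2
      obtain ⟨b1, b2, db⟩ := b
      rcases step_cases B hstep with ⟨hb2, he, heq⟩ | ⟨hb1, h0, he, heq⟩
      · subst heq
        dsimp only at h1 h2 he hb2 ⊢
        subst h1
        rcases Nat.lt_or_ge j b2 with hjb | hjb
        · exact ihM rfl hjb
        · have hb2j : b2 = j := by omega
          subst hb2j
          exfalso
          cases db with
          | false =>
              rw [eE_false_of_jelbow B hj] at he
              exact Bool.noConfusion he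
          | true => exact not_reach_jelbow_south B hj hyXn hab
      · subst heq
        dsimp only at h1 h2 he hb1 ⊢
        cases db with
        | false =>
            have hjel := eE_false_of_false B he
            have hb1t : b1 = t + 1 := by omega
            subst hb1t
            exact Or.inl (hIH (t + 1) b2 (by omega) h2 hjel)
        | true =>
            rcases col_run B hab b1 b2 rfl with hcol | ⟨ρ, hρ1, hρ2, hρ3⟩
            · exact Or.inr (by omega)
            · exact Or.inl (hIH ρ b2 (by omega) h2 hρ3)

/-- **Key lemma.** A jelbow tile at `(t, j)` forces an inversion of `w`
south-east of it: rows `t ≤ c < d` with `w c > w d ≥ j`. -/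
lemma jelbow_lemma {w : Equiv.Perm (Fin n)} (hw : B.toDiagram.HasPerm w) :
    ∀ k t j : ℕ, n - j ≤ k → B.tile t j = Tile.jelbow →
      ∃ c d : Fin n, t ≤ (c : ℕ) ∧ c < d ∧ j ≤ (w d : ℕ) ∧ w d < w c := by
  intro k
  induction k with
  | zero =>
      intro t j hk hj
      have := (tile_lt B hj).2
      omega
  | succ k ih =>
      intro t j hk hj
      have htn : t < n - 1 := jelbow_not_bottom B hj
      have hjn : j < n - 1 := jelbow_not_right B hj
      have htn' : t < n := lt_of_lt_of_le htn (Nat.sub_le _ _)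
      have hjn' : j < n := lt_of_lt_of_le hjn (Nat.sub_le _ _)
      -- the convenient form of the induction hypothesis
      have IH : ∀ t' j' : ℕ, t < t' → j < j' → B.tile t' j' = Tile.jelbow →
          ∃ c d : Fin n, t ≤ (c : ℕ) ∧ c < d ∧ j ≤ (w d : ℕ) ∧ w d < w c := by
        intro t' j' ht' hj' hjel
        obtain ⟨c, d, hc, hcd, hd1, hd2⟩ := ih t' j' (by omega) hjel
        exact ⟨c, d, by omega, hcd, by omega, hd2⟩
      -- the pipe of column j turns east at (s, j) with t < s
      obtain ⟨s, hts, hsn, hreS, heS⟩ := climb_col B hj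
      have hstepS := step_east B hsn (by omega) heS
      have hreS' : Reach B j (s, j + 1, false) := hreS.tail hstepS
      rcases run_east B hjn' n s (j + 1) (by omega) hreS' with hexit | ⟨γ, hγ1, hγ2, hγ3⟩
      · -- pipe j exits at row s, so w s = j
        have hs_eq : s = ((w.symm ⟨j, hjn'⟩ : Fin n) : ℕ) := exitsAt_w B hw hjn' hexit
        have hws : w ⟨s, hsn⟩ = ⟨j, hjn'⟩ := by
          have : (⟨s, hsn⟩ : Fin n) = w.symm ⟨j, hjn'⟩ := Fin.ext hs_eq
          rw [this, Equiv.apply_symm_apply]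
        -- the pipe exiting at row t
        obtain ⟨dX, hrX, heX⟩ := hw ⟨t, htn'⟩
        set yX : ℕ := ((w ⟨t, htn'⟩ : Fin n) : ℕ) with hyX
        clear_value yX
        have hyXn : yX < n := hyX ▸ (w ⟨t, htn'⟩).isLt
        rcases row_exit_aux B hj htn IH hyXn (t, n - 1, dX) hrX rfl
            (by dsimp only; omega) with hgoal | hlt
        · exact hgoal
        · refine ⟨⟨t, htn'⟩, ⟨s, hsn⟩, le_rfl, Fin.mk_lt_mk.mpr hts, ?_, ?_⟩
          · rw [hws]
          · rw [Fin.lt_def, hws]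
            exact hyX ▸ hlt
      · -- the pipe of column j turns north at a jelbow (s, γ) with γ > j
        exact IH s γ hts (by omega) hγ3

end BPDProof

namespace BPDProof

open Relation

variable {n : ℕ} (B : BPD n)

lemma reach_dir_row {y : ℕ} {σ τ : ℕ × ℕ × Bool} (h1 : Reach B y σ) (h2 : Reach B y τ)
    (hlt : τ.1 < σ.1) : ReflTransGen B.toDiagram.Step σ τ :=
  (confluence B h1 h2).resolve_right fun hcon =>
    absurd ((rtg_mono B hcon).1) (by omega)

lemma reach_dir_col {y : ℕ} {σ τ : ℕ × ℕ × Bool} (h1 : Reach B y σ) (h2 : Reach B y τ)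
    (hlt : σ.2.1 < τ.2.1) : ReflTransGen B.toDiagram.Step σ τ :=
  (confluence B h1 h2).resolve_right fun hcon =>
    absurd ((rtg_mono B hcon).2) (by omega)

/-- If a pipe passes a cross tile and later a cell strictly to the east in the
same row, it passes the cross horizontally. -/
lemma same_row_dir {a b b' : ℕ} {d d' : Bool} (hb : b < b')
    (hcross : B.tile a b = Tile.cross)
    (h : ReflTransGen B.toDiagram.Step (a, b, d) (a, b', d')) : d = false := by
  by_contra hd
  have hd' : d = true := by simpa using hd
  subst hd'
  rcases h.cases_head with heq | ⟨m, hm, hrest⟩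
  · injection heq with h1 h2
    injection h2 with h2 h3
    omega
  · rcases step_cases B hm with ⟨-, he, -⟩ | ⟨-, h0, -, heq⟩
    · dsimp only at he
      rw [hcross] at he
      exact Bool.noConfusion he
    · subst heq
      have hle : a ≤ a - 1 := (rtg_mono B hrest).1
      dsimp only at h0
      omega

/-- If a pipe passes a cross tile and later a cell strictly to the north in the
same column, it passes the cross vertically. -/
lemma same_col_dir {a a' b : ℕ} {d d' : Bool} (ha : a' < a)
    (hcross : B.tile a b = Tile.cross)
    (h : ReflTransGen B.toDiagram.Step (a, b, d) (a', b, d')) : d = true := by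
  by_contra hd
  have hd' : d = false := by simpa using hd
  subst hd'
  rcases h.cases_head with heq | ⟨m, hm, hrest⟩
  · injection heq with h1 h2
    omega
  · rcases step_cases B hm with ⟨-, -, heq⟩ | ⟨-, -, he, -⟩
    · subst heq
      have hle : b + 1 ≤ b := (rtg_mono B hrest).2
      omega
    · dsimp only at he
      rw [hcross] at he
      exact Bool.noConfusion he

section Main

variable {w : Equiv.Perm (Fin n)} (hw : B.toDiagram.HasPerm w)
include hw

/-- Two distinct pipes cannot occupy the same state. -/
lemma not_shared_state {y₁ y₂ : ℕ} (h1 : y₁ < n) (h2 : y₂ < n) (hne : y₁ ≠ y₂)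
    {σ : ℕ × ℕ × Bool} (r1 : Reach B y₁ σ) (r2 : Reach B y₂ σ) : False :=
  hne (shared_state B hw h1 h2 r1 r2)

/-- The two cells of a double crossing are strictly anti-ordered. -/
lemma cells_anti {y₁ y₂ : ℕ} (h1 : y₁ < n) (h2 : y₂ < n) (hne : y₁ ≠ y₂)
    {a b a' b' : ℕ} (hcell : ¬ (a = a' ∧ b = b'))
    (hcr : B.tile a b = Tile.cross) (hcr' : B.tile a' b' = Tile.cross)
    {da db' : Bool} (r1 : Reach B y₁ (a, b, da)) (r1' : Reach B y₁ (a', b', db'))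
    {ea eb' : Bool} (r2 : Reach B y₂ (a, b, ea)) (r2' : Reach B y₂ (a', b', eb')) :
    a ≠ a' ∧ b ≠ b' ∧ (a' < a ↔ b < b') := by
  have hrow : a ≠ a' := by
    rintro rfl
    rcases Nat.lt_trichotomy b b' with hbb | rfl | hbb
    · have e1 : da = false := same_row_dir B hbb hcr (reach_dir_col B r1 r1' hbb)
      have e2 : ea = false := same_row_dir B hbb hcr (reach_dir_col B r2 r2' hbb)
      exact not_shared_state B hw h1 h2 hne (e1 ▸ r1) (e2 ▸ r2)
    · exact hcell ⟨rfl, rfl⟩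
    · have e1 : db' = false := same_row_dir B hbb hcr' (reach_dir_col B r1' r1 hbb)
      have e2 : eb' = false := same_row_dir B hbb hcr' (reach_dir_col B r2' r2 hbb)
      exact not_shared_state B hw h1 h2 hne (e1 ▸ r1') (e2 ▸ r2')
  have hcol : b ≠ b' := by
    rintro rfl
    rcases Nat.lt_trichotomy a a' with haa | rfl | haa
    · have e1 : db' = true := same_col_dir B haa hcr' (reach_dir_row B r1' r1 haa)
      have e2 : eb' = true := same_col_dir B haa hcr' (reach_dir_row B r2' r2 haa)
      exact not_shared_state B hw h1 h2 hne (e1 ▸ r1') (e2 ▸ r2')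
    · exact hcell ⟨rfl, rfl⟩
    · have e1 : da = true := same_col_dir B haa hcr (reach_dir_row B r1 r1' haa)
      have e2 : ea = true := same_col_dir B haa hcr (reach_dir_row B r2 r2' haa)
      exact not_shared_state B hw h1 h2 hne (e1 ▸ r1) (e2 ▸ r2)
  refine ⟨hrow, hcol, ?_⟩
  constructor
  · intro haa
    have hd := reach_dir_row B r1 r1' haa
    have : b ≤ b' := (rtg_mono B hd).2
    omega
  · intro hbb
    have hd := reach_dir_col B r1 r1' hbb
    have : a' ≤ a := (rtg_mono B hd).1
    omega

end Main

end BPDProof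

namespace BPDProof

lemma fin4_cases : ∀ i : Fin 4, i = 0 ∨ i = 1 ∨ i = 2 ∨ i = 3 := by decide

lemma permContains_of_four {n : ℕ} (w : Equiv.Perm (Fin n)) (p : Equiv.Perm (Fin 4))
    (a0 a1 a2 a3 : Fin n)
    (h01 : a0 < a1) (h12 : a1 < a2) (h23 : a2 < a3)
    (hiff : ∀ i j : Fin 4, p i < p j ↔ w (![a0, a1, a2, a3] i) < w (![a0, a1, a2, a3] j)) :
    PermContains w p := by
  refine ⟨OrderEmbedding.ofStrictMono ![a0, a1, a2, a3] ?_, hiff⟩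
  intro i j hij
  rcases fin4_cases i with rfl | rfl | rfl | rfl <;>
    rcases fin4_cases j with rfl | rfl | rfl | rfl <;>
      first
        | exact absurd hij (by decide)
        | exact h01
        | exact h12
        | exact h23
        | exact h01.trans h12
        | exact h12.trans h23
        | exact (h01.trans h12).trans h23

lemma build_pattern {n : ℕ} {w : Equiv.Perm (Fin n)} {p q c d : Fin n}
    (hpq : p < q) (hqc : q < c) (hcd : c < d)
    (hpd : w p < w d) (hqd : w q < w d) (hdc : w d < w c) :
    PermContains w p1243 ∨ PermContains w p2143 := by
  have hpc : w p < w c := hpd.trans hdc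
  have hqc2 : w q < w c := hqd.trans hdc
  have hne : w p ≠ w q := fun h => absurd (w.injective h) (ne_of_lt hpq)
  rcases lt_or_gt_of_ne hne with hAB | hBA
  · refine Or.inl (permContains_of_four w p1243 p q c d hpq hqc hcd ?_)
    intro i j
    rcases fin4_cases i with rfl | rfl | rfl | rfl <;>
      rcases fin4_cases j with rfl | rfl | rfl | rfl <;>
        first
          | exact iff_of_true (by decide) hAB
          | exact iff_of_true (by decide) hpc
          | exact iff_of_true (by decide) hpd
          | exact iff_of_true (by decide) hqc2
          | exact iff_of_true (by decide) hqd
          | exact iff_of_true (by decide) hdc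
          | exact iff_of_false (by decide) (lt_irrefl _)
          | exact iff_of_false (by decide) (asymm hAB)
          | exact iff_of_false (by decide) (asymm hpc)
          | exact iff_of_false (by decide) (asymm hpd)
          | exact iff_of_false (by decide) (asymm hqc2)
          | exact iff_of_false (by decide) (asymm hqd)
          | exact iff_of_false (by decide) (asymm hdc)
  · refine Or.inr (permContains_of_four w p2143 p q c d hpq hqc hcd ?_)
    intro i j
    rcases fin4_cases i with rfl | rfl | rfl | rfl <;>
      rcases fin4_cases j with rfl | rfl | rfl | rfl <;>
        first
          | exact iff_of_true (by decide) hBA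
          | exact iff_of_true (by decide) hpc
          | exact iff_of_true (by decide) hpd
          | exact iff_of_true (by decide) hqc2
          | exact iff_of_true (by decide) hqd
          | exact iff_of_true (by decide) hdc
          | exact iff_of_false (by decide) (lt_irrefl _)
          | exact iff_of_false (by decide) (asymm hBA)
          | exact iff_of_false (by decide) (asymm hpc)
          | exact iff_of_false (by decide) (asymm hpd)
          | exact iff_of_false (by decide) (asymm hqc2)
          | exact iff_of_false (by decide) (asymm hqd)
          | exact iff_of_false (by decide) (asymm hdc)

end BPDProof

namespace BPDProof

open Relation

variable {n : ℕ} (B : BPD n)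

lemma main_aux {w : Equiv.Perm (Fin n)} (hw : B.toDiagram.HasPerm w)
    {y₁ y₂ : ℕ} (h1 : y₁ < n) (h2 : y₂ < n) (hne : y₁ ≠ y₂)
    {i1 j1 i2 j2 : ℕ} (hi : i2 < i1) (hj : j1 < j2)
    {d1 d2 e1 e2 : Bool}
    (ra1 : Reach B y₁ (i1, j1, d1)) (ra2 : Reach B y₁ (i2, j2, d2))
    (rb1 : Reach B y₂ (i1, j1, e1)) (rb2 : Reach B y₂ (i2, j2, e2)) :
    PermContains w p1243 ∨ PermContains w p2143 := by
  have hy1j : y₁ ≤ j1 := entry_col_le B hw ra1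
  have hy2j : y₂ ≤ j1 := entry_col_le B hw rb1
  have hx1 : ((w.symm ⟨y₁, h1⟩ : Fin n) : ℕ) ≤ i2 := exit_row_le B hw h1 ra2
  have hx2 : ((w.symm ⟨y₂, h2⟩ : Fin n) : ℕ) ≤ i2 := exit_row_le B hw h2 rb2
  -- one of the two pipes passes the north-east crossing vertically
  have hQ : ∃ y, y < n ∧ y ≤ j1 ∧ Reach B y (i2, j2, true) := by
    by_cases hd2 : d2 = true
    · exact ⟨y₁, h1, hy1j, hd2 ▸ ra2⟩
    · by_cases he2 : e2 = true
      · exact ⟨y₂, h2, hy2j, he2 ▸ rb2⟩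
      · exfalso
        have hd2' : d2 = false := by simpa using hd2
        have he2' : e2 = false := by simpa using he2
        exact not_shared_state B hw h1 h2 hne (hd2' ▸ ra2) (he2' ▸ rb2)
  obtain ⟨yQ, hyQn, hyQj, rQ⟩ := hQ
  -- it entered column j2 through a jelbow strictly below row i2
  rcases col_run B rQ i2 j2 rfl with hcol | ⟨ρ, hρ1, hρ2, hρ3⟩
  · omega
  · obtain ⟨cF, dF, hc1, hcd, hdv, hdc⟩ :=
      jelbow_lemma B hw n ρ j2 (by omega) hρ3
    set P1 : Fin n := w.symm ⟨y₁, h1⟩ with hP1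
    set P2 : Fin n := w.symm ⟨y₂, h2⟩ with hP2
    have hv1 : ((w P1 : Fin n) : ℕ) = y₁ := by rw [hP1, Equiv.apply_symm_apply]
    have hv2 : ((w P2 : Fin n) : ℕ) = y₂ := by rw [hP2, Equiv.apply_symm_apply]
    have hP12 : P1 ≠ P2 := by
      intro h
      apply hne
      have := w.symm.injective (hP1 ▸ hP2 ▸ h)
      simpa [Fin.ext_iff] using this
    have hwP1d : w P1 < w dF := by
      rw [Fin.lt_def, hv1]
      omega
    have hwP2d : w P2 < w dF := by
      rw [Fin.lt_def, hv2]
      omega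
    rcases lt_or_gt_of_ne hP12 with hPP | hPP
    · refine build_pattern hPP ?_ hcd hwP1d hwP2d hdc
      rw [Fin.lt_def]
      omega
    · refine build_pattern hPP ?_ hcd hwP2d hwP1d hdc
      rw [Fin.lt_def]
      omega

end BPDProof

/-- Proposition `BPD_nonred_1243_2143`(a).  Let `B` be a
bumpless pipe dream of size `n` with permutation `w` that is not reduced.
Then `w` contains the pattern `1243` or the pattern `2143`. -/
theorem nonreduced_contains_1243_or_2143 {n : ℕ} (B : BPD n)
    (w : Equiv.Perm (Fin n)) (hw : B.toDiagram.HasPerm w)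
    (hnr : ¬ B.toDiagram.Reduced) :
    PermContains w p1243 ∨ PermContains w p2143 := by
  simp only [Diagram.Reduced] at hnr
  push_neg at hnr
  obtain ⟨y₁, y₂, h1, h2, hne, hsub⟩ := hnr
  obtain ⟨⟨a, b⟩, hc, ⟨a', b'⟩, hc', hcc⟩ := hsub
  obtain ⟨hcr, hp1, hp2⟩ := hc
  obtain ⟨hcr', hp1', hp2'⟩ := hc'
  obtain ⟨da, r1⟩ := hp1
  obtain ⟨ea, r2⟩ := hp2
  obtain ⟨db, r1'⟩ := hp1'
  obtain ⟨eb, r2'⟩ := hp2'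
  have hcell : ¬ (a = a' ∧ b = b') := by
    rintro ⟨rfl, rfl⟩
    exact hcc rfl
  obtain ⟨hrow, hcol, hiff⟩ :=
    BPDProof.cells_anti B hw h1 h2 hne hcell hcr hcr' r1 r1' r2 r2'
  rcases Nat.lt_trichotomy a' a with hlt | heq | hgt
  · exact BPDProof.main_aux B hw h1 h2 hne hlt (hiff.mp hlt) r1 r1' r2 r2'
  · exact absurd heq.symm hrow
  · have hjj : b' < b := by
      have hnb : ¬ b < b' := fun hbb => absurd (hiff.mpr hbb) (by omega)
      omega
    exact BPDProof.main_aux B hw h1 h2 hne hgt hjj r1' r1 r2' r2
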